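/- arXiv:2602.10449 — 3 statements merged into one kernel-verified Lean document; each statement's English description precedes it below -/
import Mathlib

section
/- Let F ∈ ℝ^{d×d} be symmetric positive semidefinite with rank r and compact eigendecomposition F = UΛUᵀ, where U ∈ ℝ^{d×r} has orthonormal columns spanning range(F) and Λ ∈ ℝ^{r×r} is positive definite diagonal, and let P ∈ ℝ^{m×d} be any matrix. Then: (i) τ̃_0(g,g′) = τ_0(g,g′) for all g, g′ ∈ range(F) if and only if rank(PU) = r (i.e., P is injective on range(F)); and (ii) if rank(PU) < r, then there exists g ∈ range(F) with g ≠ 0 such that τ_0(g,g) > 0 while τ̃_0(g,g) = 0, so no uniform multiplicative approximation guarantee |τ_0(g,g′) − τ̃_0(g,g′)| ≤ ε·τ_0(g,g′) over g, g′ ∈ range(F)\{0} can hold for any ε ∈ (0,1). -/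
open MeasureTheory ProbabilityTheory Matrix
open scoped Kronecker

noncomputable def evnorm {n : Type*} [Fintype n] (x : n → ℝ) : ℝ :=
  Real.sqrt (x ⬝ᵥ x)

noncomputable def eopNorm {m n : Type*} [Fintype m] [Fintype n] (A : Matrix m n ℝ) : ℝ :=
  sSup {c : ℝ | ∃ x : n → ℝ, evnorm x ≤ 1 ∧ c = evnorm (A *ᵥ x)}

open Classical in
noncomputable def moorePenrose {m n : Type*} [Fintype m] [Fintype n]
    (A : Matrix m n ℝ) : Matrix n m ℝ :=
  if h : ∃ B : Matrix n m ℝ,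
      A * B * A = A ∧ B * A * B = B ∧ (A * B)ᵀ = A * B ∧ (B * A)ᵀ = B * A
  then h.choose else 0

noncomputable def tau {d : Type*} [Fintype d] [DecidableEq d]
    (F : Matrix d d ℝ) (lam : ℝ) (g g' : d → ℝ) : ℝ :=
  if lam = 0 then g ⬝ᵥ (moorePenrose F *ᵥ g')
  else g ⬝ᵥ ((F + lam • 1)⁻¹ *ᵥ g')

noncomputable def tauP {d m' : Type*} [Fintype d] [DecidableEq d] [Fintype m'] [DecidableEq m']
    (F : Matrix d d ℝ) (P : Matrix m' d ℝ) (lam : ℝ) (g g' : d → ℝ) : ℝ :=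
  if lam = 0 then (P *ᵥ g) ⬝ᵥ (moorePenrose (P * F * Pᵀ) *ᵥ (P *ᵥ g'))
  else (P *ᵥ g) ⬝ᵥ ((P * F * Pᵀ + lam • 1)⁻¹ *ᵥ (P *ᵥ g'))

noncomputable def effDim {d : Type*} [Fintype d] [DecidableEq d]
    (F : Matrix d d ℝ) (lam : ℝ) : ℝ :=
  Matrix.trace (F * (F + lam • 1)⁻¹)

noncomputable def minPosEigenvalue {d : Type*} [Fintype d]
    (F : Matrix d d ℝ) : ℝ :=
  sInf {c : ℝ | 0 < c ∧ ∃ x : d → ℝ, x ≠ 0 ∧ F *ᵥ x = c • x}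

def IsObliviousSketch {Ω : Type*} [MeasurableSpace Ω] (μ : Measure Ω) (K : ℝ)
    {m d : ℕ} (P : Ω → Matrix (Fin m) (Fin d) ℝ) : Prop :=
  ∃ W : Fin m → Ω → (Fin d → ℝ),
    (∀ i, Measurable (W i)) ∧
    iIndepFun W μ ∧
    (∀ i j : Fin m, IdentDistrib (W i) (W j) μ μ) ∧
    (∀ i k, ∫ ω, W i ω k ∂μ = 0) ∧
    (∀ i k l, ∫ ω, W i ω k * W i ω l ∂μ = if k = l then 1 else 0) ∧
    (∀ i (t : ℝ) (v : Fin d → ℝ), evnorm v = 1 →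
      ∫ ω, Real.exp (t * (W i ω ⬝ᵥ v)) ∂μ ≤ Real.exp (K ^ 2 * t ^ 2 / 2)) ∧
    (∀ ω i k, P ω i k = (1 / Real.sqrt m) * W i ω k)

def vkron {a b : Type*} (x : a → ℝ) (y : b → ℝ) : a × b → ℝ := fun p => x p.1 * y p.2

/-! ### Auxiliary lemmas -/

lemma mp_unique {m n : Type*} [Fintype m] [Fintype n]
    (A : Matrix m n ℝ) (B C : Matrix n m ℝ)
    (hB : A * B * A = A ∧ B * A * B = B ∧ (A * B)ᵀ = A * B ∧ (B * A)ᵀ = B * A)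
    (hC : A * C * A = A ∧ C * A * C = C ∧ (A * C)ᵀ = A * C ∧ (C * A)ᵀ = C * A) :
    B = C := by
  obtain ⟨hB1, hB2, hB3, hB4⟩ := hB
  obtain ⟨hC1, hC2, hC3, hC4⟩ := hC
  have hAB : A * B = A * C := by
    calc A * B = (A * C * A) * B := by rw [hC1]
    _ = (A*C) * (A*B) := Matrix.mul_assoc _ _ _
    _ = (A*C)ᵀ * (A*B)ᵀ := by rw [hC3, hB3]
    _ = ((A*B)*(A*C))ᵀ := (Matrix.transpose_mul _ _).symm
    _ = (A * (B*A) * C)ᵀ := by simp [Matrix.mul_assoc]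
    _ = ((A*B*A) * C)ᵀ := by simp [Matrix.mul_assoc]
    _ = (A*C)ᵀ := by rw [hB1]
    _ = A*C := hC3
  have hBA : B * A = C * A := by
    calc B * A = B * (A * C * A) := by rw [hC1]
    _ = (B*A) * (C*A) := by simp [Matrix.mul_assoc]
    _ = (B*A)ᵀ * (C*A)ᵀ := by rw [hB4, hC4]
    _ = ((C*A)*(B*A))ᵀ := (Matrix.transpose_mul _ _).symm
    _ = (C * (A*B*A))ᵀ := by simp [Matrix.mul_assoc]
    _ = (C*A)ᵀ := by rw [hB1]
    _ = C*A := hC4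
  calc B = B * A * B := hB2.symm
  _ = (C * A) * B := by rw [hBA]
  _ = C * (A * B) := by rw [Matrix.mul_assoc]
  _ = C * (A * C) := by rw [hAB]
  _ = C * A * C := by rw [Matrix.mul_assoc]
  _ = C := hC2

lemma moorePenrose_eq {m n : Type*} [Fintype m] [Fintype n]
    (A : Matrix m n ℝ) (B : Matrix n m ℝ)
    (hB : A * B * A = A ∧ B * A * B = B ∧ (A * B)ᵀ = A * B ∧ (B * A)ᵀ = B * A) :
    moorePenrose A = B := by
  classical
  have hex : ∃ B : Matrix n m ℝ,
      A * B * A = A ∧ B * A * B = B ∧ (A * B)ᵀ = A * B ∧ (B * A)ᵀ = B * A := ⟨B, hB⟩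
  rw [moorePenrose, dif_pos hex]
  exact mp_unique A _ B hex.choose_spec hB

lemma dot3 {k l : Type*} [Fintype k] [Fintype l]
    (A : Matrix k l ℝ) (M : Matrix k k ℝ) (x y : l → ℝ) :
    (A *ᵥ x) ⬝ᵥ (M *ᵥ (A *ᵥ y)) = x ⬝ᵥ ((Aᵀ * M * A) *ᵥ y) := by
  rw [Matrix.mulVec_mulVec, Matrix.dotProduct_mulVec, ← Matrix.vecMul_transpose,
    Matrix.vecMul_vecMul, ← Matrix.dotProduct_mulVec, ← Matrix.mul_assoc]

theorem stmt0 {d r m : ℕ} (F : Matrix (Fin d) (Fin d) ℝ) (hF : F.PosSemidef)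
    (hrank : F.rank = r)
    (U : Matrix (Fin d) (Fin r) ℝ) (Λ : Matrix (Fin r) (Fin r) ℝ)
    (hUortho : Uᵀ * U = 1) (hΛdiag : Λ.IsDiag) (hΛpd : Λ.PosDef)
    (hdecomp : F = U * Λ * Uᵀ)
    (hUrange : Set.range U.mulVec = Set.range F.mulVec)
    (P : Matrix (Fin m) (Fin d) ℝ) :
    ((∀ g g' : Fin d → ℝ, g ∈ Set.range F.mulVec → g' ∈ Set.range F.mulVec →
        tauP F P 0 g g' = tau F 0 g g') ↔ (P * U).rank = r)
    ∧ ((P * U).rank < r →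
        (∃ g ∈ Set.range F.mulVec, g ≠ 0 ∧ 0 < tau F 0 g g ∧ tauP F P 0 g g = 0)
        ∧ ∀ ε : ℝ, ε ∈ Set.Ioo (0 : ℝ) 1 →
          ¬ (∀ g g' : Fin d → ℝ, g ∈ Set.range F.mulVec → g' ∈ Set.range F.mulVec →
              g ≠ 0 → g' ≠ 0 →
              |tau F 0 g g' - tauP F P 0 g g'| ≤ ε * tau F 0 g g')) := by
  classical
  set Q : Matrix (Fin m) (Fin r) ℝ := P * U with hQ
  -- basic facts about Λ
  have hΛunit : IsUnit Λ.det := hΛpd.det_pos.ne'.isUnit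
  have hΛ1 : Λ * Λ⁻¹ = 1 := Matrix.mul_nonsing_inv _ hΛunit
  have hΛ2 : Λ⁻¹ * Λ = 1 := Matrix.nonsing_inv_mul _ hΛunit
  have hΛsym : Λᵀ = Λ := by
    have := hΛpd.isHermitian
    rwa [Matrix.IsHermitian, Matrix.conjTranspose_eq_transpose_of_trivial] at this
  have hΛisym : (Λ⁻¹)ᵀ = Λ⁻¹ := by
    rw [Matrix.transpose_nonsing_inv, hΛsym]
  -- cancellation helpers
  have hUc : ∀ {k : Type} [Fintype k] (X : Matrix (Fin r) k ℝ), Uᵀ * (U * X) = X := by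
    intro k _ X; rw [← Matrix.mul_assoc, hUortho, Matrix.one_mul]
  have hΛc : ∀ {k : Type} [Fintype k] (X : Matrix (Fin r) k ℝ), Λ * (Λ⁻¹ * X) = X := by
    intro k _ X; rw [← Matrix.mul_assoc, hΛ1, Matrix.one_mul]
  have hΛc' : ∀ {k : Type} [Fintype k] (X : Matrix (Fin r) k ℝ), Λ⁻¹ * (Λ * X) = X := by
    intro k _ X; rw [← Matrix.mul_assoc, hΛ2, Matrix.one_mul]
  -- Moore-Penrose inverse of F
  have hUUT : (U * Uᵀ)ᵀ = U * Uᵀ := by simp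
  have hFB : F * (U * Λ⁻¹ * Uᵀ) = U * Uᵀ := by
    rw [hdecomp]; simp only [Matrix.mul_assoc, hUc, hΛc]
  have hBF : (U * Λ⁻¹ * Uᵀ) * F = U * Uᵀ := by
    rw [hdecomp]; simp only [Matrix.mul_assoc, hUc, hΛc']
  have hMPF : moorePenrose F = U * Λ⁻¹ * Uᵀ := by
    refine moorePenrose_eq _ _ ⟨?_, ?_, ?_, ?_⟩
    · rw [hFB, hdecomp]; simp only [Matrix.mul_assoc, hUc]
    · rw [hdecomp]; simp only [Matrix.mul_assoc, hUc, hΛc', hΛc]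
    · rw [hFB]; exact hUUT
    · rw [hBF]; exact hUUT
  -- tau on the range
  have htau : ∀ x y : Fin r → ℝ, tau F 0 (U *ᵥ x) (U *ᵥ y) = x ⬝ᵥ (Λ⁻¹ *ᵥ y) := by
    intro x y
    rw [tau, if_pos rfl, hMPF, dot3]
    have key : Uᵀ * (U * Λ⁻¹ * Uᵀ) * U = Λ⁻¹ := by
      calc Uᵀ * (U * Λ⁻¹ * Uᵀ) * U = Uᵀ * (U * (Λ⁻¹ * (Uᵀ * U))) := by
            simp only [Matrix.mul_assoc]
      _ = Λ⁻¹ := by rw [hUortho, Matrix.mul_one, hUc]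
    rw [key]
  have hΛipd : (Λ⁻¹).PosDef := hΛpd.inv
  have htaupos : ∀ x : Fin r → ℝ, x ≠ 0 → 0 < x ⬝ᵥ (Λ⁻¹ *ᵥ x) := by
    intro x hx
    simpa using hΛipd.dotProduct_mulVec_pos hx
  -- U is injective
  have hUinj : ∀ x : Fin r → ℝ, U *ᵥ x = 0 → x = 0 := by
    intro x hx
    have : Uᵀ *ᵥ (U *ᵥ x) = 0 := by rw [hx, Matrix.mulVec_zero]
    rwa [Matrix.mulVec_mulVec, hUortho, Matrix.one_mulVec] at this
  -- P *ᵥ (U *ᵥ x) = Q *ᵥ x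
  have hPU : ∀ x : Fin r → ℝ, P *ᵥ (U *ᵥ x) = Q *ᵥ x := by
    intro x; rw [Matrix.mulVec_mulVec]
  -- rank facts
  have hrn : Q.rank + Module.finrank ℝ (LinearMap.ker Q.mulVecLin) = r := by
    rw [Matrix.rank]
    rw [LinearMap.finrank_range_add_finrank_ker Q.mulVecLin]
    simp [Module.finrank_fin_fun]
  -- witness in the low-rank case
  have hwitness : Q.rank < r → ∃ x : Fin r → ℝ, x ≠ 0 ∧ Q *ᵥ x = 0 := by
    intro hlt
    have hker : LinearMap.ker Q.mulVecLin ≠ ⊥ := by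
      intro h
      rw [h] at hrn
      simp at hrn
      omega
    obtain ⟨x, hx, hx0⟩ := Submodule.exists_mem_ne_zero_of_ne_bot hker
    exact ⟨x, hx0, hx⟩
  -- the bad-case consequence
  have hbad : Q.rank < r →
      ∃ g ∈ Set.range F.mulVec, g ≠ 0 ∧ 0 < tau F 0 g g ∧ tauP F P 0 g g = 0 := by
    intro hlt
    obtain ⟨x, hx0, hQx⟩ := hwitness hlt
    refine ⟨U *ᵥ x, ?_, ?_, ?_, ?_⟩
    · rw [← hUrange]; exact ⟨x, rfl⟩
    · intro h; exact hx0 (hUinj x h)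
    · rw [htau]; exact htaupos x hx0
    · rw [tauP, if_pos rfl, hPU, hQx]
      simp
  constructor
  · constructor
    · -- equality on range → full rank
      intro heq
      by_contra hne
      have hle : Q.rank ≤ r := by
        simpa using Q.rank_le_card_width
      have hlt : Q.rank < r := lt_of_le_of_ne hle hne
      obtain ⟨g, hg, hg0, htpos, htP⟩ := hbad hlt
      have := heq g g hg hg
      rw [htP] at this
      rw [← this] at htpos
      exact lt_irrefl 0 htpos
    · -- full rank → equality on range
      intro hr g g' hg hg'
      rw [← hUrange] at hg hg'
      obtain ⟨x, rfl⟩ := hg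
      obtain ⟨y, rfl⟩ := hg'
      -- Q is injective
      have hQinj : ∀ x : Fin r → ℝ, Q *ᵥ x = 0 → x = 0 := by
        intro z hz
        have hker : LinearMap.ker Q.mulVecLin = ⊥ := by
          rw [hr] at hrn
          have h0 : Module.finrank ℝ (LinearMap.ker Q.mulVecLin) = 0 := by omega
          exact Submodule.finrank_eq_zero.mp h0
        have : z ∈ LinearMap.ker Q.mulVecLin := by
          rw [LinearMap.mem_ker, Matrix.mulVecLin_apply]; exact hz
        rwa [hker, Submodule.mem_bot] at this
      -- QᵀQ is positive definite
      have hQQpd : (Qᵀ * Q).PosDef := by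
        rw [Matrix.posDef_iff_dotProduct_mulVec]
        constructor
        · rw [Matrix.IsHermitian, Matrix.conjTranspose_eq_transpose_of_trivial]
          rw [Matrix.transpose_mul, Matrix.transpose_transpose]
        · intro z hz
          have hQz : Q *ᵥ z ≠ 0 := fun h => hz (hQinj z h)
          have : z ⬝ᵥ ((Qᵀ * Q) *ᵥ z) = (Q *ᵥ z) ⬝ᵥ (Q *ᵥ z) := by
            rw [← Matrix.mulVec_mulVec, Matrix.dotProduct_mulVec, Matrix.vecMul_transpose]
          rw [star_trivial, this]
          simpa using Matrix.dotProduct_star_self_pos_iff.mpr hQz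
      set G : Matrix (Fin r) (Fin r) ℝ := (Qᵀ * Q)⁻¹ with hGdef
      have hQQunit : IsUnit (Qᵀ * Q).det := hQQpd.det_pos.ne'.isUnit
      have hG1 : (Qᵀ * Q) * G = 1 := Matrix.mul_nonsing_inv _ hQQunit
      have hG2 : G * (Qᵀ * Q) = 1 := Matrix.nonsing_inv_mul _ hQQunit
      have hGsym : Gᵀ = G := by
        rw [hGdef, Matrix.transpose_nonsing_inv, Matrix.transpose_mul,
          Matrix.transpose_transpose]
      -- cancellation helpers for Q
      have hQc : ∀ {k : Type} [Fintype k] (X : Matrix (Fin r) k ℝ),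
          G * (Qᵀ * (Q * X)) = X := by
        intro k _ X
        rw [← Matrix.mul_assoc Qᵀ Q X, ← Matrix.mul_assoc G (Qᵀ * Q) X, hG2, Matrix.one_mul]
      have hQc' : ∀ {k : Type} [Fintype k] (X : Matrix (Fin r) k ℝ),
          Qᵀ * (Q * (G * X)) = X := by
        intro k _ X
        rw [← Matrix.mul_assoc Q G X, ← Matrix.mul_assoc Qᵀ (Q * G) X,
          ← Matrix.mul_assoc Qᵀ Q G, hG1, Matrix.one_mul]
      -- decomposition of P * F * Pᵀ
      have hM : P * F * Pᵀ = Q * (Λ * Qᵀ) := by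
        rw [hdecomp, hQ, Matrix.transpose_mul]
        simp only [Matrix.mul_assoc]
      set B : Matrix (Fin m) (Fin m) ℝ := Q * (G * (Λ⁻¹ * (G * Qᵀ))) with hBdef
      have hMB : (P * F * Pᵀ) * B = Q * (G * Qᵀ) := by
        rw [hM, hBdef]
        simp only [Matrix.mul_assoc, hQc', hΛc]
      have hBM : B * (P * F * Pᵀ) = Q * (G * Qᵀ) := by
        rw [hM, hBdef]
        simp only [Matrix.mul_assoc, hQc, hΛc']
      have hQGQ : (Q * (G * Qᵀ))ᵀ = Q * (G * Qᵀ) := by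
        rw [Matrix.transpose_mul, Matrix.transpose_mul, Matrix.transpose_transpose, hGsym,
          Matrix.mul_assoc]
      have hMPB : moorePenrose (P * F * Pᵀ) = B := by
        refine moorePenrose_eq _ _ ⟨?_, ?_, ?_, ?_⟩
        · rw [hMB, hM]; simp only [Matrix.mul_assoc, hQc]
        · rw [hBM, hBdef]; simp only [Matrix.mul_assoc, hQc]
        · rw [hMB]; exact hQGQ
        · rw [hBM]; exact hQGQ
      -- compute tauP
      rw [tauP, if_pos rfl, hMPB, hPU, hPU, dot3, htau]
      have key : Qᵀ * B * Q = Λ⁻¹ := by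
        rw [hBdef]
        calc Qᵀ * (Q * (G * (Λ⁻¹ * (G * Qᵀ)))) * Q
          = Qᵀ * (Q * (G * (Λ⁻¹ * (G * (Qᵀ * Q))))) := by simp only [Matrix.mul_assoc]
        _ = Λ⁻¹ * (G * (Qᵀ * Q)) := hQc' _
        _ = Λ⁻¹ := by rw [hG2, Matrix.mul_one]
      rw [key]
  · -- part (ii)
    intro hlt
    refine ⟨hbad hlt, ?_⟩
    intro ε hε h
    obtain ⟨g, hg, hg0, htpos, htP⟩ := hbad hlt
    have := h g g hg hg hg0 hg0
    rw [htP, sub_zero, abs_of_pos htpos] at this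
    have hlt' : ε * tau F 0 g g < tau F 0 g g := by
      nlinarith [hε.1, hε.2, htpos]
    linarith
end

section
/- Let F ∈ ℝ^{d×d} be symmetric positive semidefinite, λ > 0, ε ∈ (0,1), and let P ∈ ℝ^{m×d} be any (deterministic) matrix. Define B := F^{1/2}(F+λI_d)^{−1/2} and G := F^{1/2}PᵀPF^{1/2}. If ‖Bᵀ(PᵀP − I_d)B‖₂ ≤ ε/2, then ‖F(F+λI_d)⁻¹ − G(G+λI_d)⁻¹‖₂ ≤ ε. -/
open MeasureTheory ProbabilityTheory Matrix
open scoped Kronecker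

/-- The PSD square root as defined in Mathlib (Dec 2024), `Matrix.PosSemidef.sqrt`. -/
noncomputable def psdSqrt {n : Type*} [Fintype n] [DecidableEq n]
    {A : Matrix n n ℝ} (hA : A.PosSemidef) : Matrix n n ℝ :=
  hA.1.eigenvectorUnitary.1 * diagonal ((↑) ∘ (√·) ∘ hA.1.eigenvalues) *
  (star hA.1.eigenvectorUnitary : Matrix n n ℝ)

section aux
variable {n : Type*} [Fintype n]

lemma dot_self_nonneg' (x : n → ℝ) : 0 ≤ x ⬝ᵥ x :=
  Finset.sum_nonneg fun i _ => mul_self_nonneg _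

lemma evnorm_nonneg' (x : n → ℝ) : 0 ≤ evnorm x := Real.sqrt_nonneg _

lemma evnorm_sq' (x : n → ℝ) : evnorm x ^ 2 = x ⬝ᵥ x :=
  Real.sq_sqrt (dot_self_nonneg' x)

lemma evnorm_zero_iff' {x : n → ℝ} (h : evnorm x = 0) : x = 0 := by
  have h2 : x ⬝ᵥ x = 0 := by rw [← evnorm_sq', h]; ring
  exact dotProduct_self_eq_zero.mp h2

lemma evnorm_smul' (c : ℝ) (x : n → ℝ) : evnorm (c • x) = |c| * evnorm x := by
  unfold evnorm
  rw [smul_dotProduct, dotProduct_smul, smul_eq_mul, smul_eq_mul, ← mul_assoc,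
    ← sq, Real.sqrt_mul (sq_nonneg c), Real.sqrt_sq_eq_abs]

lemma abs_dot_le' (x y : n → ℝ) : |x ⬝ᵥ y| ≤ evnorm x * evnorm y := by
  have h := Finset.sum_mul_sq_le_sq_mul_sq Finset.univ x y
  have h2 : (x ⬝ᵥ y) ^ 2 ≤ (x ⬝ᵥ x) * (y ⬝ᵥ y) := by
    simpa [dotProduct, sq] using h
  have := abs_le_abs (le_of_eq (rfl : |x ⬝ᵥ y| = |x ⬝ᵥ y|))
  rw [← Real.sqrt_sq (abs_nonneg (x ⬝ᵥ y)), sq_abs]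
  calc Real.sqrt ((x ⬝ᵥ y)^2) ≤ Real.sqrt ((x ⬝ᵥ x) * (y ⬝ᵥ y)) := Real.sqrt_le_sqrt h2
    _ = evnorm x * evnorm y := Real.sqrt_mul (dot_self_nonneg' x) _

variable {m : Type*} [Fintype m]

lemma eopNorm_bdd (A : Matrix m n ℝ) :
    BddAbove {c : ℝ | ∃ x : n → ℝ, evnorm x ≤ 1 ∧ c = evnorm (A *ᵥ x)} := by
  refine ⟨Real.sqrt (∑ i, ∑ j, A i j ^ 2), ?_⟩
  rintro c ⟨x, hx, rfl⟩
  apply Real.sqrt_le_sqrt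
  have hx2 : x ⬝ᵥ x ≤ 1 := by
    have h := evnorm_sq' x
    nlinarith [evnorm_nonneg' x]
  have key : (A *ᵥ x) ⬝ᵥ (A *ᵥ x) = ∑ i, (∑ j, A i j * x j) ^ 2 := by
    simp [dotProduct, mulVec, sq]
  rw [key]
  calc ∑ i, (∑ j, A i j * x j) ^ 2
      ≤ ∑ i, (∑ j, A i j ^ 2) * (∑ j, x j ^ 2) := by
        refine Finset.sum_le_sum fun i _ => ?_
        exact Finset.sum_mul_sq_le_sq_mul_sq Finset.univ _ _
    _ ≤ ∑ i, (∑ j, A i j ^ 2) * 1 := by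
        refine Finset.sum_le_sum fun i _ => ?_
        refine mul_le_mul_of_nonneg_left ?_ (Finset.sum_nonneg fun j _ => sq_nonneg _)
        simpa [dotProduct, sq] using hx2
    _ = ∑ i, ∑ j, A i j ^ 2 := by simp

lemma eopNorm_nonneg' (A : Matrix m n ℝ) : 0 ≤ eopNorm A := by
  have h0 : (0:ℝ) ∈ {c : ℝ | ∃ x : n → ℝ, evnorm x ≤ 1 ∧ c = evnorm (A *ᵥ x)} := by
    refine ⟨0, ?_, ?_⟩ <;> simp [evnorm]
  exact le_csSup (eopNorm_bdd A) h0

lemma evnorm_mulVec_le (A : Matrix m n ℝ) (x : n → ℝ) :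
    evnorm (A *ᵥ x) ≤ eopNorm A * evnorm x := by
  rcases eq_or_lt_of_le (evnorm_nonneg' x) with h0 | h0
  · have hx : x = 0 := evnorm_zero_iff' h0.symm
    subst hx
    simp [evnorm, ← h0]
  · set u : n → ℝ := (evnorm x)⁻¹ • x with hu
    have hnu : evnorm u = 1 := by
      rw [hu, evnorm_smul', abs_of_pos (inv_pos.2 h0), inv_mul_cancel₀ h0.ne']
    have hmem : evnorm (A *ᵥ u) ∈ {c : ℝ | ∃ y : n → ℝ, evnorm y ≤ 1 ∧ c = evnorm (A *ᵥ y)} :=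
      ⟨u, le_of_eq hnu, rfl⟩
    have hle : evnorm (A *ᵥ u) ≤ eopNorm A := le_csSup (eopNorm_bdd A) hmem
    have hAu : evnorm (A *ᵥ u) = (evnorm x)⁻¹ * evnorm (A *ᵥ x) := by
      rw [hu, mulVec_smul, evnorm_smul', abs_of_pos (inv_pos.2 h0)]
    rw [hAu] at hle
    calc evnorm (A *ᵥ x) = (evnorm x)⁻¹ * evnorm (A *ᵥ x) * evnorm x := by
          field_simp
      _ ≤ eopNorm A * evnorm x := by
          exact mul_le_mul_of_nonneg_right hle (le_of_lt h0)

lemma eopNorm_le_of (A : Matrix m n ℝ) {c : ℝ} (hc : 0 ≤ c)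
    (h : ∀ x : n → ℝ, evnorm x ≤ 1 → evnorm (A *ᵥ x) ≤ c) : eopNorm A ≤ c := by
  apply Real.sSup_le _ hc
  rintro y ⟨x, hx, rfl⟩
  exact h x hx

lemma abs_qform_le (A : Matrix n n ℝ) (x : n → ℝ) :
    |x ⬝ᵥ A *ᵥ x| ≤ eopNorm A * (x ⬝ᵥ x) := by
  calc |x ⬝ᵥ A *ᵥ x| ≤ evnorm x * evnorm (A *ᵥ x) := abs_dot_le' x _
    _ ≤ evnorm x * (eopNorm A * evnorm x) :=
        mul_le_mul_of_nonneg_left (evnorm_mulVec_le A x) (evnorm_nonneg' x)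
    _ = eopNorm A * (evnorm x ^ 2) := by ring
    _ = eopNorm A * (x ⬝ᵥ x) := by rw [evnorm_sq']

lemma dot_symm' {M : Matrix n n ℝ} (h : Mᵀ = M) (u v : n → ℝ) :
    v ⬝ᵥ M *ᵥ u = u ⬝ᵥ M *ᵥ v := by
  rw [dotProduct_mulVec, ← vecMul_transpose, h, dotProduct_comm]

lemma dot_shift {S : Matrix n n ℝ} (hS : Sᵀ = S) (y v : n → ℝ) :
    y ⬝ᵥ S *ᵥ v = (S *ᵥ y) ⬝ᵥ v := by
  rw [dotProduct_mulVec, ← vecMul_transpose, hS]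

lemma eps_facts {e : ℝ} (h0 : 0 < e) (h1 : e < 1) :
    (1 - e/2)⁻¹ - 1 ≤ e ∧ 1 - (1 + e/2)⁻¹ ≤ e ∧ 1 ≤ (1 - e/2)⁻¹ ∧ (1 + e/2)⁻¹ ≤ 1 := by
  have hc1 : (0:ℝ) < 1 - e/2 := by linarith
  have hc2 : (0:ℝ) < 1 + e/2 := by linarith
  have hr1 : (1 - e/2)⁻¹ * (1 - e/2) = 1 := inv_mul_cancel₀ hc1.ne'
  have hr2 : (1 + e/2)⁻¹ * (1 + e/2) = 1 := inv_mul_cancel₀ hc2.ne'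
  have hp1 : 0 < (1 - e/2)⁻¹ := inv_pos.2 hc1
  have hp2 : 0 < (1 + e/2)⁻¹ := inv_pos.2 hc2
  refine ⟨?_, ?_, ?_, ?_⟩ <;> nlinarith

lemma symm_of_herm {M : Matrix n n ℝ} (h : M.IsHermitian) : Mᵀ = M := by
  have := h.eq
  rwa [conjTranspose_eq_transpose_of_trivial] at this

lemma herm_of_symm {M : Matrix n n ℝ} (h : Mᵀ = M) : M.IsHermitian := by
  unfold Matrix.IsHermitian
  rwa [conjTranspose_eq_transpose_of_trivial]

lemma psd_qform {M : Matrix n n ℝ} (hM : M.PosSemidef) (x : n → ℝ) :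
    0 ≤ x ⬝ᵥ M *ᵥ x := by simpa using hM.dotProduct_mulVec_nonneg x

lemma psdSqrt_mul_self' [DecidableEq n] {A : Matrix n n ℝ}
    (hA : A.PosSemidef) : psdSqrt hA * psdSqrt hA = A := by
  have hU : (star hA.1.eigenvectorUnitary : Matrix n n ℝ) * hA.1.eigenvectorUnitary.1 = 1 :=
    Unitary.coe_star_mul_self _
  have hspec := hA.1.spectral_theorem
  rw [Unitary.conjStarAlgAut_apply] at hspec
  have hD : diagonal (((↑) ∘ (√·) ∘ hA.1.eigenvalues) : n → ℝ) *
      diagonal (((↑) ∘ (√·) ∘ hA.1.eigenvalues) : n → ℝ)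
      = (diagonal (RCLike.ofReal ∘ hA.1.eigenvalues) : Matrix n n ℝ) := by
    rw [diagonal_mul_diagonal]; congr 1; funext i
    simp [Real.mul_self_sqrt (hA.eigenvalues_nonneg i)]
  unfold psdSqrt
  conv_rhs => rw [hspec]
  rw [show ∀ U D S : Matrix n n ℝ, U * D * S * (U * D * S) = U * (D * (S * U) * D) * S by
    intro U D S; simp only [Matrix.mul_assoc], hU, Matrix.mul_one, hD]

lemma psdSqrt_transpose' [DecidableEq n] {A : Matrix n n ℝ}
    (hA : A.PosSemidef) : (psdSqrt hA)ᵀ = psdSqrt hA := by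
  unfold psdSqrt
  rw [transpose_mul, transpose_mul, diagonal_transpose, Matrix.mul_assoc]
  have h1 : ((star hA.1.eigenvectorUnitary : Matrix n n ℝ))ᵀ = hA.1.eigenvectorUnitary.1 := by
    rw [star_eq_conjTranspose, conjTranspose_eq_transpose_of_trivial, transpose_transpose]
  have h2 : (hA.1.eigenvectorUnitary.1)ᵀ = (star hA.1.eigenvectorUnitary : Matrix n n ℝ) := by
    rw [star_eq_conjTranspose, conjTranspose_eq_transpose_of_trivial]
  rw [h1, h2]

lemma psd_cs {M : Matrix n n ℝ} (hM : M.PosSemidef) (u v : n → ℝ) :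
    (u ⬝ᵥ M *ᵥ v) ^ 2 ≤ (u ⬝ᵥ M *ᵥ u) * (v ⬝ᵥ M *ᵥ v) := by
  have hsym := symm_of_herm hM.1
  have key : ∀ t : ℝ, 0 ≤ (v ⬝ᵥ M *ᵥ v) * (t * t) + (2 * (u ⬝ᵥ M *ᵥ v)) * t
      + (u ⬝ᵥ M *ᵥ u) := by
    intro t
    have h0 := psd_qform hM (u + t • v)
    have hexp : (u + t • v) ⬝ᵥ M *ᵥ (u + t • v)
        = (u ⬝ᵥ M *ᵥ u) + 2 * t * (u ⬝ᵥ M *ᵥ v) + t * t * (v ⬝ᵥ M *ᵥ v) := by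
      rw [mulVec_add, dotProduct_add, add_dotProduct, add_dotProduct,
        mulVec_smul, dotProduct_smul, smul_dotProduct, smul_dotProduct,
        dot_symm' hsym u v]
      simp [smul_eq_mul]; ring
    rw [hexp] at h0
    linarith
  have hd := discrim_le_zero key
  rw [discrim] at hd
  nlinarith

lemma qform_inv_anti [DecidableEq n] {A B : Matrix n n ℝ} (hA : A.PosDef) (hB : B.PosDef)
    (hAB : ∀ x : n → ℝ, x ⬝ᵥ A *ᵥ x ≤ x ⬝ᵥ B *ᵥ x) (x : n → ℝ) :
    x ⬝ᵥ B⁻¹ *ᵥ x ≤ x ⬝ᵥ A⁻¹ *ᵥ x := by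
  have hAdet : IsUnit A.det := hA.det_pos.ne'.isUnit
  have hBdet : IsUnit B.det := hB.det_pos.ne'.isUnit
  set y := B⁻¹ *ᵥ x with hy
  have hBy : B *ᵥ y = x := by
    rw [hy, mulVec_mulVec, mul_nonsing_inv B hBdet, one_mulVec]
  have hAx : A *ᵥ (A⁻¹ *ᵥ x) = x := by
    rw [mulVec_mulVec, mul_nonsing_inv A hAdet, one_mulVec]
  set s := x ⬝ᵥ B⁻¹ *ᵥ x with hs
  set t := x ⬝ᵥ A⁻¹ *ᵥ x with ht
  have hs0 : 0 ≤ s := psd_qform hB.inv.posSemidef x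
  have ht0 : 0 ≤ t := psd_qform hA.inv.posSemidef x
  have hsy : s = y ⬝ᵥ B *ᵥ y := by
    rw [hBy, dotProduct_comm]
  have hcs := psd_cs hA.posSemidef y (A⁻¹ *ᵥ x)
  rw [hAx] at hcs
  have hdot : y ⬝ᵥ x = s := by rw [dotProduct_comm]
  rw [hdot] at hcs
  have h2 : (A⁻¹ *ᵥ x) ⬝ᵥ x = t := by rw [dotProduct_comm]
  rw [h2] at hcs
  have h3 : y ⬝ᵥ A *ᵥ y ≤ s := by rw [hsy]; exact hAB y
  have h4 : s ^ 2 ≤ s * t := le_trans hcs (mul_le_mul_of_nonneg_right h3 ht0)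
  rcases eq_or_lt_of_le hs0 with h | h
  · rw [← h]; exact ht0
  · nlinarith

lemma eopNorm_le_of_qform {D : Matrix n n ℝ} (hD : Dᵀ = D) {c : ℝ} (hc : 0 ≤ c)
    (h : ∀ x : n → ℝ, |x ⬝ᵥ D *ᵥ x| ≤ c * (x ⬝ᵥ x)) : eopNorm D ≤ c := by
  have key : ∀ u v : n → ℝ, u ⬝ᵥ D *ᵥ v ≤ c / 2 * (u ⬝ᵥ u + v ⬝ᵥ v) := by
    intro u v
    have h1 := (abs_le.1 (h (u + v))).2
    have h2 := (abs_le.1 (h (u - v))).1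
    have e1 : (u + v) ⬝ᵥ D *ᵥ (u + v)
        = u ⬝ᵥ D *ᵥ u + 2 * (u ⬝ᵥ D *ᵥ v) + v ⬝ᵥ D *ᵥ v := by
      rw [mulVec_add, dotProduct_add, add_dotProduct, add_dotProduct, dot_symm' hD u v]
      ring
    have e2 : (u - v) ⬝ᵥ D *ᵥ (u - v)
        = u ⬝ᵥ D *ᵥ u - 2 * (u ⬝ᵥ D *ᵥ v) + v ⬝ᵥ D *ᵥ v := by
      rw [mulVec_sub, dotProduct_sub, sub_dotProduct, sub_dotProduct, dot_symm' hD u v]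
      ring
    have e3 : (u + v) ⬝ᵥ (u + v) = u ⬝ᵥ u + 2 * (u ⬝ᵥ v) + v ⬝ᵥ v := by
      rw [dotProduct_add, add_dotProduct, add_dotProduct, dotProduct_comm v u]
      ring
    have e4 : (u - v) ⬝ᵥ (u - v) = u ⬝ᵥ u - 2 * (u ⬝ᵥ v) + v ⬝ᵥ v := by
      rw [dotProduct_sub, sub_dotProduct, sub_dotProduct, dotProduct_comm v u]
      ring
    rw [e1, e3] at h1
    rw [e2, e4] at h2
    linarith
  have key2 : ∀ x : n → ℝ, evnorm (D *ᵥ x) ≤ c * evnorm x := by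
    intro x
    set s := evnorm x with hsdef
    set b := evnorm (D *ᵥ x) with hbdef
    have hs0 : 0 ≤ s := evnorm_nonneg' x
    have hb0 : 0 ≤ b := evnorm_nonneg' _
    rcases eq_or_lt_of_le hb0 with hb | hb
    · rw [← hb]; positivity
    rcases eq_or_lt_of_le hs0 with hs | hs
    · exfalso
      have hx0 : x = 0 := evnorm_zero_iff' hs.symm
      rw [hx0] at hbdef
      simp [evnorm] at hbdef
      rw [hbdef] at hb
      exact lt_irrefl _ hb
    have hk := key (s • (D *ᵥ x)) (b • x)
    have lhs_eq : (s • (D *ᵥ x)) ⬝ᵥ D *ᵥ (b • x) = s * b * b ^ 2 := by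
      rw [mulVec_smul, smul_dotProduct, dotProduct_smul]
      have : (D *ᵥ x) ⬝ᵥ (D *ᵥ x) = b ^ 2 := (evnorm_sq' _).symm
      rw [smul_eq_mul, smul_eq_mul, this]
      ring
    have rhs_eq : (s • (D *ᵥ x)) ⬝ᵥ (s • (D *ᵥ x)) + (b • x) ⬝ᵥ (b • x)
        = 2 * (s ^ 2 * b ^ 2) := by
      rw [smul_dotProduct, dotProduct_smul, smul_dotProduct, dotProduct_smul]
      have h1 : (D *ᵥ x) ⬝ᵥ (D *ᵥ x) = b ^ 2 := (evnorm_sq' _).symm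
      have h2 : x ⬝ᵥ x = s ^ 2 := (evnorm_sq' _).symm
      rw [smul_eq_mul, smul_eq_mul, smul_eq_mul, smul_eq_mul, h1, h2]
      ring
    rw [lhs_eq, rhs_eq] at hk
    -- hk : s * b * b^2 ≤ c/2 * (2 * (s^2 * b^2))
    nlinarith [mul_pos hs (mul_pos hb hb)]
  apply eopNorm_le_of _ hc
  intro x hx
  calc evnorm (D *ᵥ x) ≤ c * evnorm x := key2 x
    _ ≤ c * 1 := mul_le_mul_of_nonneg_left hx hc
    _ = c := mul_one c

end aux

theorem stmt10 {d m : ℕ} (F : Matrix (Fin d) (Fin d) ℝ) (hF : F.PosSemidef)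
    (lam ε : ℝ) (hlam : 0 < lam) (hε : ε ∈ Set.Ioo (0 : ℝ) 1)
    (P : Matrix (Fin m) (Fin d) ℝ)
    (hFl : (F + lam • 1).PosSemidef)
    (B G : Matrix (Fin d) (Fin d) ℝ)
    (hB : B = psdSqrt hF * (psdSqrt hFl)⁻¹)
    (hG : G = psdSqrt hF * Pᵀ * P * psdSqrt hF)
    (hyp : eopNorm (Bᵀ * (Pᵀ * P - 1) * B) ≤ ε / 2) :
    eopNorm (F * (F + lam • 1)⁻¹ - G * (G + lam • 1)⁻¹) ≤ ε := by
  obtain ⟨hε0, hε1⟩ := hε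
  -- basic quadratic form facts
  have hFq : ∀ y : Fin d → ℝ, 0 ≤ y ⬝ᵥ F *ᵥ y := psd_qform hF
  have qsmul : ∀ (c : ℝ) (M : Matrix (Fin d) (Fin d) ℝ) (x : Fin d → ℝ),
      x ⬝ᵥ (c • M) *ᵥ x = c * (x ⬝ᵥ M *ᵥ x) := by
    intro c M x
    rw [smul_mulVec, dotProduct_smul, smul_eq_mul]
  have hHq : ∀ y : Fin d → ℝ,
      y ⬝ᵥ (F + lam • 1) *ᵥ y = y ⬝ᵥ F *ᵥ y + lam * (y ⬝ᵥ y) := by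
    intro y
    rw [add_mulVec, dotProduct_add, smul_mulVec, one_mulVec, dotProduct_smul,
      smul_eq_mul]
  have hHsym : (F + lam • (1 : Matrix (Fin d) (Fin d) ℝ))ᵀ = F + lam • 1 :=
    symm_of_herm hFl.1
  have hH : (F + lam • (1 : Matrix (Fin d) (Fin d) ℝ)).PosDef := by
    refine Matrix.PosDef.of_dotProduct_mulVec_pos hFl.1 fun x hx => ?_
    have hxx : 0 < x ⬝ᵥ x := by
      rcases eq_or_lt_of_le (dot_self_nonneg' x) with h | h
      · exact absurd (dotProduct_self_eq_zero.mp h.symm) hx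
      · exact h
    have : 0 < x ⬝ᵥ (F + lam • 1) *ᵥ x := by
      rw [hHq]
      nlinarith [hFq x]
    simpa using this
  have hHdet : IsUnit (F + lam • (1 : Matrix (Fin d) (Fin d) ℝ)).det :=
    hH.det_pos.ne'.isUnit
  -- square roots
  have hSS : (psdSqrt hFl) * (psdSqrt hFl) = F + lam • 1 := psdSqrt_mul_self' hFl
  have hRR : (psdSqrt hF) * (psdSqrt hF) = F := psdSqrt_mul_self' hF
  have hSsym : (psdSqrt hFl)ᵀ = (psdSqrt hFl) := psdSqrt_transpose' hFl
  have hRsym : (psdSqrt hF)ᵀ = (psdSqrt hF) := psdSqrt_transpose' hF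
  have hSdet : IsUnit (psdSqrt hFl).det := by
    have hdd : (psdSqrt hFl).det * (psdSqrt hFl).det = (F + lam • 1).det := by
      rw [← det_mul, hSS]
    refine isUnit_iff_ne_zero.2 fun h => ?_
    rw [h, mul_zero] at hdd
    exact hH.det_pos.ne' hdd.symm
  have hSinv1 : (psdSqrt hFl)⁻¹ * (psdSqrt hFl) = 1 := nonsing_inv_mul _ hSdet
  have hSinv2 : (psdSqrt hFl) * (psdSqrt hFl)⁻¹ = 1 := mul_nonsing_inv _ hSdet
  -- key conjugation identity
  have hkey : (psdSqrt hFl) * (Bᵀ * (Pᵀ * P - 1) * B) * (psdSqrt hFl) = G - F := by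
    rw [hB, hG, transpose_mul, transpose_nonsing_inv, hSsym, hRsym]
    have h1 : (psdSqrt hFl) * ((psdSqrt hFl)⁻¹ * (psdSqrt hF)) = (psdSqrt hF) := by
      rw [← Matrix.mul_assoc, hSinv2, Matrix.one_mul]
    have h2 : (psdSqrt hF) * (psdSqrt hFl)⁻¹ * (psdSqrt hFl) = (psdSqrt hF) := by
      rw [Matrix.mul_assoc, hSinv1, Matrix.mul_one]
    calc (psdSqrt hFl) * ((psdSqrt hFl)⁻¹ * (psdSqrt hF) * (Pᵀ * P - 1) * ((psdSqrt hF) * (psdSqrt hFl)⁻¹))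
          * (psdSqrt hFl)
        = ((psdSqrt hFl) * ((psdSqrt hFl)⁻¹ * (psdSqrt hF))) * (Pᵀ * P - 1)
          * ((psdSqrt hF) * (psdSqrt hFl)⁻¹ * (psdSqrt hFl)) := by
          simp only [Matrix.mul_assoc]
      _ = (psdSqrt hF) * (Pᵀ * P - 1) * (psdSqrt hF) := by rw [h1, h2]
      _ = (psdSqrt hF) * Pᵀ * P * (psdSqrt hF) - F := by
          rw [Matrix.mul_sub, Matrix.sub_mul, Matrix.mul_one, hRR]
          simp only [Matrix.mul_assoc]
  -- quadratic-form version of the hypothesis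
  have hyp' : ∀ y : Fin d → ℝ,
      |y ⬝ᵥ G *ᵥ y - y ⬝ᵥ F *ᵥ y| ≤ ε / 2 * (y ⬝ᵥ (F + lam • 1) *ᵥ y) := by
    intro y
    have h1 : y ⬝ᵥ (G - F) *ᵥ y = y ⬝ᵥ G *ᵥ y - y ⬝ᵥ F *ᵥ y := by
      rw [sub_mulVec, dotProduct_sub]
    have hconj : y ⬝ᵥ ((psdSqrt hFl) * (Bᵀ * (Pᵀ * P - 1) * B) * (psdSqrt hFl)) *ᵥ y
        = ((psdSqrt hFl) *ᵥ y) ⬝ᵥ (Bᵀ * (Pᵀ * P - 1) * B) *ᵥ ((psdSqrt hFl) *ᵥ y) := by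
      rw [← mulVec_mulVec, ← mulVec_mulVec, dot_shift hSsym]
    have h3 : ((psdSqrt hFl) *ᵥ y) ⬝ᵥ ((psdSqrt hFl) *ᵥ y) = y ⬝ᵥ (F + lam • 1) *ᵥ y := by
      rw [← dot_shift hSsym, mulVec_mulVec, hSS]
    rw [← h1, ← hkey, hconj]
    calc |((psdSqrt hFl) *ᵥ y) ⬝ᵥ (Bᵀ * (Pᵀ * P - 1) * B) *ᵥ ((psdSqrt hFl) *ᵥ y)|
        ≤ eopNorm (Bᵀ * (Pᵀ * P - 1) * B) * (((psdSqrt hFl) *ᵥ y) ⬝ᵥ ((psdSqrt hFl) *ᵥ y)) :=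
          abs_qform_le _ _
      _ ≤ ε / 2 * (((psdSqrt hFl) *ᵥ y) ⬝ᵥ ((psdSqrt hFl) *ᵥ y)) :=
          mul_le_mul_of_nonneg_right hyp (dot_self_nonneg' _)
      _ = ε / 2 * (y ⬝ᵥ (F + lam • 1) *ᵥ y) := by rw [h3]
  -- G symmetric, G + lam PosDef
  have hGsym : Gᵀ = G := by
    rw [hG]
    simp [Matrix.transpose_mul, Matrix.mul_assoc, hRsym]
  have hGlsym : (G + lam • (1 : Matrix (Fin d) (Fin d) ℝ))ᵀ = G + lam • 1 := by
    rw [transpose_add, hGsym, transpose_smul, transpose_one]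
  have hGlq : ∀ y : Fin d → ℝ,
      y ⬝ᵥ (G + lam • 1) *ᵥ y = y ⬝ᵥ G *ᵥ y + lam * (y ⬝ᵥ y) := by
    intro y
    rw [add_mulVec, dotProduct_add, smul_mulVec, one_mulVec, dotProduct_smul,
      smul_eq_mul]
  have hGl : (G + lam • (1 : Matrix (Fin d) (Fin d) ℝ)).PosDef := by
    refine Matrix.PosDef.of_dotProduct_mulVec_pos (herm_of_symm hGlsym) fun x hx => ?_
    have hxx : 0 < x ⬝ᵥ x := by
      rcases eq_or_lt_of_le (dot_self_nonneg' x) with h | h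
      · exact absurd (dotProduct_self_eq_zero.mp h.symm) hx
      · exact h
    have h1 := (abs_le.1 (hyp' x)).1
    rw [hHq] at h1
    have : 0 < x ⬝ᵥ (G + lam • 1) *ᵥ x := by
      rw [hGlq]
      nlinarith [hFq x, mul_pos hlam hxx, mul_nonneg hε0.le (hFq x),
        mul_pos hε0 (mul_pos hlam hxx)]
    simpa using this
  have hGldet : IsUnit (G + lam • (1 : Matrix (Fin d) (Fin d) ℝ)).det :=
    hGl.det_pos.ne'.isUnit
  -- scaled matrices
  have hc1 : (0:ℝ) < 1 - ε / 2 := by linarith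
  have hc2 : (0:ℝ) < 1 + ε / 2 := by linarith
  have hPDsmul : ∀ c : ℝ, 0 < c →
      ((c • (F + lam • 1)) : Matrix (Fin d) (Fin d) ℝ).PosDef := by
    intro c hc
    refine Matrix.PosDef.of_dotProduct_mulVec_pos (herm_of_symm (by rw [transpose_smul, hHsym])) fun x hx => ?_
    have : 0 < x ⬝ᵥ (c • (F + lam • 1)) *ᵥ x := by
      rw [qsmul]
      have := hH.dotProduct_mulVec_pos hx
      simp only [star_trivial] at this
      positivity
    simpa using this
  have hPDlam : ((lam • 1) : Matrix (Fin d) (Fin d) ℝ).PosDef := by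
    refine Matrix.PosDef.of_dotProduct_mulVec_pos (herm_of_symm (by rw [transpose_smul, transpose_one])) fun x hx => ?_
    have hxx : 0 < x ⬝ᵥ x := by
      rcases eq_or_lt_of_le (dot_self_nonneg' x) with h | h
      · exact absurd (dotProduct_self_eq_zero.mp h.symm) hx
      · exact h
    have : 0 < x ⬝ᵥ (lam • (1 : Matrix (Fin d) (Fin d) ℝ)) *ᵥ x := by
      rw [qsmul, one_mulVec]
      positivity
    simpa using this
  -- inverse of scaled matrices
  have hinv_smul : ∀ c : ℝ, c ≠ 0 →
      ((c • (F + lam • 1)) : Matrix (Fin d) (Fin d) ℝ)⁻¹ = c⁻¹ • (F + lam • 1)⁻¹ := by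
    intro c hc
    apply inv_eq_right_inv
    rw [Matrix.smul_mul, Matrix.mul_smul, smul_smul, mul_inv_cancel₀ hc,
      mul_nonsing_inv _ hHdet, one_smul]
  have hinv_lam : ((lam • 1) : Matrix (Fin d) (Fin d) ℝ)⁻¹ = lam⁻¹ • 1 := by
    apply inv_eq_right_inv
    rw [Matrix.smul_mul, Matrix.mul_smul, smul_smul, mul_inv_cancel₀ hlam.ne',
      Matrix.one_mul, one_smul]
  -- the three inverse quadratic-form bounds
  have bound1 : ∀ x : Fin d → ℝ, x ⬝ᵥ (G + lam • 1)⁻¹ *ᵥ x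
      ≤ (1 - ε / 2)⁻¹ * (x ⬝ᵥ (F + lam • 1)⁻¹ *ᵥ x) := by
    intro x
    have h := qform_inv_anti (hPDsmul _ hc1) hGl (fun y => by
      rw [qsmul]
      have h1 := (abs_le.1 (hyp' y)).1
      rw [hGlq, hHq]
      rw [hHq] at h1
      nlinarith [hFq y, dot_self_nonneg' y]) x
    rwa [hinv_smul _ hc1.ne', qsmul] at h
  have bound2 : ∀ x : Fin d → ℝ, (1 + ε / 2)⁻¹ * (x ⬝ᵥ (F + lam • 1)⁻¹ *ᵥ x)
      ≤ x ⬝ᵥ (G + lam • 1)⁻¹ *ᵥ x := by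
    intro x
    have h := qform_inv_anti hGl (hPDsmul _ hc2) (fun y => by
      rw [qsmul]
      have h1 := (abs_le.1 (hyp' y)).2
      rw [hGlq, hHq]
      rw [hHq] at h1
      nlinarith [hFq y, dot_self_nonneg' y]) x
    rwa [hinv_smul _ hc2.ne', qsmul] at h
  have bound3 : ∀ x : Fin d → ℝ, lam * (x ⬝ᵥ (F + lam • 1)⁻¹ *ᵥ x) ≤ x ⬝ᵥ x := by
    intro x
    have h := qform_inv_anti hPDlam hH (fun y => by
      rw [qsmul, one_mulVec, hHq]
      nlinarith [hFq y]) x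
    rw [hinv_lam, qsmul, one_mulVec] at h
    calc lam * (x ⬝ᵥ (F + lam • 1)⁻¹ *ᵥ x) ≤ lam * (lam⁻¹ * (x ⬝ᵥ x)) :=
          mul_le_mul_of_nonneg_left h hlam.le
      _ = x ⬝ᵥ x := by field_simp
  -- rewrite the difference matrix
  have hFH : F * (F + lam • 1)⁻¹ = 1 - lam • (F + lam • 1)⁻¹ := by
    have h : F * (F + lam • 1)⁻¹ + lam • (F + lam • 1)⁻¹ = 1 := by
      calc F * (F + lam • 1)⁻¹ + lam • (F + lam • 1)⁻¹
          = (F + lam • 1) * (F + lam • 1)⁻¹ := by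
            rw [Matrix.add_mul, Matrix.smul_mul, Matrix.one_mul]
        _ = 1 := mul_nonsing_inv _ hHdet
    exact eq_sub_of_add_eq h
  have hGGl : G * (G + lam • 1)⁻¹ = 1 - lam • (G + lam • 1)⁻¹ := by
    have h : G * (G + lam • 1)⁻¹ + lam • (G + lam • 1)⁻¹ = 1 := by
      calc G * (G + lam • 1)⁻¹ + lam • (G + lam • 1)⁻¹
          = (G + lam • 1) * (G + lam • 1)⁻¹ := by
            rw [Matrix.add_mul, Matrix.smul_mul, Matrix.one_mul]
        _ = 1 := mul_nonsing_inv _ hGldet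
    exact eq_sub_of_add_eq h
  have hDiff : F * (F + lam • 1)⁻¹ - G * (G + lam • 1)⁻¹
      = lam • (G + lam • 1)⁻¹ - lam • (F + lam • 1)⁻¹ := by
    rw [hFH, hGGl]; abel
  rw [hDiff]
  -- symmetry of the difference
  have hHinvsym : ((F + lam • (1:Matrix (Fin d) (Fin d) ℝ))⁻¹)ᵀ = (F + lam • 1)⁻¹ := by
    rw [transpose_nonsing_inv, hHsym]
  have hGlinvsym : ((G + lam • (1:Matrix (Fin d) (Fin d) ℝ))⁻¹)ᵀ = (G + lam • 1)⁻¹ := by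
    rw [transpose_nonsing_inv, hGlsym]
  have hDsym : (lam • (G + lam • (1:Matrix (Fin d) (Fin d) ℝ))⁻¹
      - lam • (F + lam • 1)⁻¹)ᵀ
      = lam • (G + lam • 1)⁻¹ - lam • (F + lam • 1)⁻¹ := by
    rw [transpose_sub, transpose_smul, transpose_smul, hHinvsym, hGlinvsym]
  -- final quadratic-form bound
  apply eopNorm_le_of_qform hDsym hε0.le
  intro x
  have hq0 : 0 ≤ x ⬝ᵥ (F + lam • 1)⁻¹ *ᵥ x := psd_qform hH.inv.posSemidef x
  have hxq : x ⬝ᵥ (lam • (G + lam • 1)⁻¹ - lam • (F + lam • 1)⁻¹) *ᵥ x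
      = lam * (x ⬝ᵥ (G + lam • 1)⁻¹ *ᵥ x) - lam * (x ⬝ᵥ (F + lam • 1)⁻¹ *ᵥ x) := by
    rw [sub_mulVec, dotProduct_sub, qsmul, qsmul]
  rw [hxq]
  set q := x ⬝ᵥ (F + lam • 1)⁻¹ *ᵥ x with hqdef
  set g := x ⬝ᵥ (G + lam • 1)⁻¹ *ᵥ x with hgdef
  have f1 : g ≤ (1 - ε / 2)⁻¹ * q := bound1 x
  have f2 : (1 + ε / 2)⁻¹ * q ≤ g := bound2 x
  have f3 : lam * q ≤ x ⬝ᵥ x := bound3 x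
  have hxx0 : 0 ≤ x ⬝ᵥ x := dot_self_nonneg' x
  set r1 : ℝ := (1 - ε / 2)⁻¹ with hr1def
  set r2 : ℝ := (1 + ε / 2)⁻¹ with hr2def
  obtain ⟨hr1eps, hr2eps, hr1ge, hr2le⟩ := eps_facts hε0 hε1
  rw [abs_le]
  constructor
  · -- lower bound
    have h1 : lam * (r2 * q) ≤ lam * g := mul_le_mul_of_nonneg_left f2 hlam.le
    have h2 : (1 - r2) * (lam * q) ≤ ε * (lam * q) :=
      mul_le_mul_of_nonneg_right hr2eps (mul_nonneg hlam.le hq0)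
    have h3 : ε * (lam * q) ≤ ε * (x ⬝ᵥ x) := mul_le_mul_of_nonneg_left f3 hε0.le
    nlinarith
  · -- upper bound
    have h1 : lam * g ≤ lam * (r1 * q) := mul_le_mul_of_nonneg_left f1 hlam.le
    have h2 : (r1 - 1) * (lam * q) ≤ ε * (lam * q) :=
      mul_le_mul_of_nonneg_right hr1eps (mul_nonneg hlam.le hq0)
    have h3 : ε * (lam * q) ≤ ε * (x ⬝ᵥ x) := mul_le_mul_of_nonneg_left f3 hε0.le
    nlinarith
end

section
/- Let F, G ∈ ℝ^{d×d} be symmetric positive semidefinite, λ > 0, and ε ∈ (0,1). If (1−ε)F ⪯ G ⪯ (1+ε)F in the Loewner order, then ‖G(G+λI_d)⁻¹ − F(F+λI_d)⁻¹‖₂ ≤ ε. -/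
open MeasureTheory ProbabilityTheory Matrix
open scoped Kronecker

set_option linter.unusedSectionVars false
section helpers

variable {n : Type*} [Fintype n] [DecidableEq n]

lemma herm_smul (c : ℝ) {M : Matrix n n ℝ} (h : M.IsHermitian) : (c • M).IsHermitian := by
  unfold Matrix.IsHermitian at *
  rw [conjTranspose_smul, h, star_trivial]

lemma psd_smul {M : Matrix n n ℝ} (hM : M.PosSemidef) {c : ℝ} (hc : 0 ≤ c) :
    (c • M).PosSemidef := by
  refine Matrix.PosSemidef.of_dotProduct_mulVec_nonneg (herm_smul c hM.1) fun x => ?_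
  have := hM.dotProduct_mulVec_nonneg x
  simp only [Matrix.smul_mulVec, dotProduct_smul, smul_eq_mul]
  exact mul_nonneg hc this

lemma pd_smul_one {c : ℝ} (hc : 0 < c) : (c • (1 : Matrix n n ℝ)).PosDef := by
  rw [Matrix.smul_one_eq_diagonal]
  exact Matrix.PosDef.diagonal (fun _ => hc)

lemma psd_of_conj {K N : Matrix n n ℝ} (hK : K.PosDef) (hN : (K * N * K).PosSemidef) :
    N.PosSemidef := by
  have hu : IsUnit K.det := (Matrix.isUnit_iff_isUnit_det _).mp hK.isUnit
  have hsym : (K⁻¹)ᴴ = K⁻¹ := hK.posSemidef.inv.isHermitian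
  have h := hN.conjTranspose_mul_mul_same (K⁻¹)
  have heq : (K⁻¹)ᴴ * (K * N * K) * K⁻¹ = N := by
    rw [hsym]
    simp only [Matrix.mul_assoc]
    rw [Matrix.mul_nonsing_inv _ hu, Matrix.mul_one, Matrix.nonsing_inv_mul_cancel_left _ _ hu]
  rwa [heq] at h

lemma inv_commute {P M : Matrix n n ℝ} (hP : P.PosDef) (h : P * M = M * P) :
    P⁻¹ * M = M * P⁻¹ := by
  have hu : IsUnit P.det := (Matrix.isUnit_iff_isUnit_det _).mp hP.isUnit
  calc P⁻¹ * M = P⁻¹ * M * (P * P⁻¹) := by rw [Matrix.mul_nonsing_inv _ hu, mul_one]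
    _ = P⁻¹ * (M * P) * P⁻¹ := by simp [Matrix.mul_assoc]
    _ = P⁻¹ * (P * M) * P⁻¹ := by rw [h]
    _ = (P⁻¹ * P) * M * P⁻¹ := by simp [Matrix.mul_assoc]
    _ = M * P⁻¹ := by rw [Matrix.nonsing_inv_mul _ hu, one_mul]

lemma Lpoly {F : Matrix n n ℝ} (hF : F.PosSemidef) {lam ε a b : ℝ}
    (hlam : 0 < lam) (hε : 0 < ε) (ha : 0 ≤ a) (hb : b = a + ε) (hab : 1 ≤ a + b) :
    (ε • 1 - lam • ((a • F + lam • 1)⁻¹ - (b • F + lam • 1)⁻¹)).PosSemidef := by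
  have hb0 : 0 ≤ b := by rw [hb]; linarith
  set P := a • F + lam • 1 with hPdef
  set Q := b • F + lam • 1 with hQdef
  have hPpd : P.PosDef := Matrix.PosDef.posSemidef_add (psd_smul hF ha) (pd_smul_one hlam)
  have hQpd : Q.PosDef := Matrix.PosDef.posSemidef_add (psd_smul hF hb0) (pd_smul_one hlam)
  have huP : IsUnit P.det := (Matrix.isUnit_iff_isUnit_det _).mp hPpd.isUnit
  have huQ : IsUnit Q.det := (Matrix.isUnit_iff_isUnit_det _).mp hQpd.isUnit
  have hPQ : P * Q = Q * P := by
    rw [hPdef, hQdef]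
    simp only [add_mul, mul_add, smul_mul_assoc, mul_smul_comm, smul_smul, one_mul, mul_one]
    module
  -- K = P * Q is PosDef
  have hKexp : P * Q = (lam*lam) • (1 : Matrix n n ℝ) + ((a*b) • F^2 + ((a+b)*lam) • F) := by
    rw [hPdef, hQdef]
    simp only [add_mul, mul_add, smul_mul_assoc, mul_smul_comm, smul_smul, one_mul, mul_one,
      pow_two]
    module
  have hKpd : (P * Q).PosDef := by
    rw [hKexp]
    exact (pd_smul_one (by positivity)).add_posSemidef
      ((psd_smul (hF.pow 2) (by positivity)).add (psd_smul hF (by positivity)))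
  -- N rewrite
  have hQP : Q - P = ε • F := by rw [hPdef, hQdef, hb]; module
  have hinvdiff : P⁻¹ - Q⁻¹ = ε • (P⁻¹ * F * Q⁻¹) := by
    have : P⁻¹ * (Q - P) * Q⁻¹ = P⁻¹ - Q⁻¹ := by
      rw [Matrix.mul_sub, Matrix.sub_mul, Matrix.mul_nonsing_inv_cancel_right _ _ huQ,
        Matrix.nonsing_inv_mul _ huP, one_mul]
    rw [← this, hQP]
    simp [Matrix.mul_assoc, Matrix.smul_mul, Matrix.mul_smul]
  have hN : ε • (1 : Matrix n n ℝ) - lam • (P⁻¹ - Q⁻¹)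
      = ε • 1 - (lam * ε) • (P⁻¹ * F * Q⁻¹) := by
    rw [hinvdiff, smul_smul]
  -- conjugation computation
  have hmid : (P * Q) * (P⁻¹ * F * Q⁻¹) * (P * Q) = Q * (F * P) := by
    rw [hPQ]
    simp only [Matrix.mul_assoc]
    rw [Matrix.mul_nonsing_inv_cancel_left _ _ huP, Matrix.nonsing_inv_mul_cancel_left _ _ huQ]
  have hKNK : (P * Q) * (ε • 1 - lam • (P⁻¹ - Q⁻¹)) * (P * Q)
      = ε • ((P * Q) * (P * Q)) - (lam * ε) • (Q * (F * P)) := by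
    rw [hN, Matrix.mul_sub, Matrix.sub_mul, ← hmid]
    simp only [Matrix.mul_smul, Matrix.smul_mul, Matrix.mul_one]
  have hWexp : (P * Q) * (P * Q) - lam • (Q * (F * P))
      = (a^2*b^2) • F^4 + (a*b*(2*(a+b)-1)*lam) • F^3
        + (((a+b)^2 + 2*(a*b) - (a+b))*lam^2) • F^2
        + ((2*(a+b)-1)*lam^3) • F + (lam^4) • (1 : Matrix n n ℝ) := by
    rw [hPdef, hQdef]
    simp only [add_mul, mul_add, smul_mul_assoc, mul_smul_comm, smul_smul, one_mul, mul_one,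
      smul_sub, smul_add, pow_succ, pow_zero, mul_assoc]
    module
  have hab2 : (1:ℝ) ≤ 2*(a+b) - 1 := by linarith
  have hW : ((P * Q) * (P * Q) - lam • (Q * (F * P))).PosSemidef := by
    rw [hWexp]
    refine ((((psd_smul (hF.pow 4) (by positivity)).add
      (psd_smul (hF.pow 3) ?_)).add
      (psd_smul (hF.pow 2) ?_)).add
      (psd_smul hF ?_)).add (psd_smul Matrix.PosSemidef.one (by positivity))
    · exact mul_nonneg (mul_nonneg (mul_nonneg ha hb0) (by linarith)) hlam.le
    · refine mul_nonneg ?_ (sq_nonneg lam)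
      nlinarith [mul_nonneg (show (0:ℝ) ≤ a+b by linarith) (show (0:ℝ) ≤ a+b-1 by linarith),
        mul_nonneg ha hb0]
    · exact mul_nonneg (by linarith) (by positivity)
  have hKNKpsd : ((P * Q) * (ε • 1 - lam • (P⁻¹ - Q⁻¹)) * (P * Q)).PosSemidef := by
    rw [hKNK]
    have : ε • ((P * Q) * (P * Q)) - (lam * ε) • (Q * (F * P))
        = ε • ((P * Q) * (P * Q) - lam • (Q * (F * P))) := by
      rw [smul_sub, smul_smul]
      ring_nf
    rw [this]
    exact psd_smul hW hε.le
  exact psd_of_conj hKpd hKNKpsd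

lemma inv_antitone {B C : Matrix n n ℝ} (hB : B.PosDef) (hC : C.PosDef)
    (h : (B - C).PosSemidef) : (C⁻¹ - B⁻¹).PosSemidef := by
  have huB : IsUnit B.det := (Matrix.isUnit_iff_isUnit_det _).mp hB.isUnit
  have huC : IsUnit C.det := (Matrix.isUnit_iff_isUnit_det _).mp hC.isUnit
  have hCt : Cᵀ = C := by
    rw [← Matrix.conjTranspose_eq_transpose_of_trivial]; exact hC.isHermitian
  refine Matrix.PosSemidef.of_dotProduct_mulVec_nonneg
    ((hC.posSemidef.inv.isHermitian).sub (hB.posSemidef.inv.isHermitian)) fun x => ?_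
  set u := B⁻¹ *ᵥ x with hu
  have hBu : B *ᵥ u = x := by
    rw [hu, Matrix.mulVec_mulVec, Matrix.mul_nonsing_inv _ huB, Matrix.one_mulVec]
  have hCinv : C *ᵥ (C⁻¹ *ᵥ x) = x := by
    rw [Matrix.mulVec_mulVec, Matrix.mul_nonsing_inv _ huC, Matrix.one_mulVec]
  -- key1 : u ⬝ᵥ (C *ᵥ u) ≤ u ⬝ᵥ x
  have key1 : u ⬝ᵥ (C *ᵥ u) ≤ u ⬝ᵥ x := by
    have h2 := h.dotProduct_mulVec_nonneg u
    simp only [star_trivial, Matrix.sub_mulVec, dotProduct_sub, hBu] at h2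
    linarith
  -- key2
  have key2 : 0 ≤ (u - C⁻¹ *ᵥ x) ⬝ᵥ (C *ᵥ (u - C⁻¹ *ᵥ x)) := by
    have := hC.posSemidef.dotProduct_mulVec_nonneg (u - C⁻¹ *ᵥ x)
    simpa using this
  have t1 : (C⁻¹ *ᵥ x) ⬝ᵥ (C *ᵥ u) = x ⬝ᵥ u := by
    rw [dotProduct_mulVec, ← Matrix.mulVec_transpose, hCt, hCinv]
  have expand : (u - C⁻¹ *ᵥ x) ⬝ᵥ (C *ᵥ (u - C⁻¹ *ᵥ x))
      = u ⬝ᵥ (C *ᵥ u) - u ⬝ᵥ x - x ⬝ᵥ u + (C⁻¹ *ᵥ x) ⬝ᵥ x := by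
    rw [Matrix.mulVec_sub, hCinv, dotProduct_sub, sub_dotProduct, sub_dotProduct, t1]
    ring
  have hcomm1 : x ⬝ᵥ u = u ⬝ᵥ x := dotProduct_comm _ _
  have hcomm2 : (C⁻¹ *ᵥ x) ⬝ᵥ x = x ⬝ᵥ (C⁻¹ *ᵥ x) := dotProduct_comm _ _
  have goal' : 0 ≤ x ⬝ᵥ (C⁻¹ *ᵥ x) - x ⬝ᵥ (B⁻¹ *ᵥ x) := by
    have hux : x ⬝ᵥ (B⁻¹ *ᵥ x) = u ⬝ᵥ x := by rw [hu, hcomm1]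
    rw [hux]
    rw [expand] at key2
    linarith
  simpa [Matrix.sub_mulVec, dotProduct_sub] using goal'


end helpers

theorem stmt11 {d : ℕ} (F G : Matrix (Fin d) (Fin d) ℝ)
    (hF : F.PosSemidef) (hG : G.PosSemidef)
    (lam ε : ℝ) (hlam : 0 < lam) (hε : ε ∈ Set.Ioo (0 : ℝ) 1)
    (h1 : (G - (1 - ε) • F).PosSemidef) (h2 : ((1 + ε) • F - G).PosSemidef) :
    eopNorm (G * (G + lam • 1)⁻¹ - F * (F + lam • 1)⁻¹) ≤ ε := by
  obtain ⟨hε0, hε1⟩ := hε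
  set A := F + lam • (1 : Matrix (Fin d) (Fin d) ℝ) with hAdef
  set B := G + lam • (1 : Matrix (Fin d) (Fin d) ℝ) with hBdef
  have hApd : A.PosDef := Matrix.PosDef.posSemidef_add hF (pd_smul_one hlam)
  have hBpd : B.PosDef := Matrix.PosDef.posSemidef_add hG (pd_smul_one hlam)
  have huA : IsUnit A.det := (Matrix.isUnit_iff_isUnit_det _).mp hApd.isUnit
  have huB : IsUnit B.det := (Matrix.isUnit_iff_isUnit_det _).mp hBpd.isUnit
  have hGB : G * B⁻¹ = 1 - lam • B⁻¹ := by
    have hGe : G = B - lam • 1 := by rw [hBdef]; abel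
    rw [hGe, Matrix.sub_mul, Matrix.mul_nonsing_inv _ huB, Matrix.smul_mul, Matrix.one_mul]
  have hFA : F * A⁻¹ = 1 - lam • A⁻¹ := by
    have hFe : F = A - lam • 1 := by rw [hAdef]; abel
    rw [hFe, Matrix.sub_mul, Matrix.mul_nonsing_inv _ huA, Matrix.smul_mul, Matrix.one_mul]
  set D := lam • A⁻¹ - lam • B⁻¹ with hDdef
  have hD : G * B⁻¹ - F * A⁻¹ = D := by rw [hGB, hFA, hDdef]; abel
  set Cp := (1 + ε) • F + lam • (1 : Matrix (Fin d) (Fin d) ℝ) with hCpdef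
  set Cm := (1 - ε) • F + lam • (1 : Matrix (Fin d) (Fin d) ℝ) with hCmdef
  have hCppd : Cp.PosDef :=
    Matrix.PosDef.posSemidef_add (psd_smul hF (by linarith)) (pd_smul_one hlam)
  have hCmpd : Cm.PosDef :=
    Matrix.PosDef.posSemidef_add (psd_smul hF (by linarith)) (pd_smul_one hlam)
  have hup : (ε • 1 - D).PosSemidef := by
    have hN := Lpoly (a := 1) (b := 1 + ε) hF hlam hε0 zero_le_one rfl (by linarith)
    rw [one_smul, ← hAdef, ← hCpdef] at hN
    have hsub : (Cp - B).PosSemidef := by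
      have e : Cp - B = (1 + ε) • F - G := by rw [hCpdef, hBdef]; abel
      rw [e]; exact h2
    have hmono := inv_antitone hCppd hBpd hsub
    have hsum := hN.add (psd_smul hmono hlam.le)
    have e2 : ε • (1 : Matrix (Fin d) (Fin d) ℝ) - D
        = (ε • 1 - lam • (A⁻¹ - Cp⁻¹)) + lam • (B⁻¹ - Cp⁻¹) := by
      rw [hDdef]; simp only [smul_sub]; abel
    rw [e2]; exact hsum
  have hdn : (ε • 1 + D).PosSemidef := by
    have hN := Lpoly (a := 1 - ε) (b := 1) hF hlam hε0 (by linarith) (by ring) (by linarith)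
    rw [one_smul, ← hAdef, ← hCmdef] at hN
    have hsub : (B - Cm).PosSemidef := by
      have e : B - Cm = G - (1 - ε) • F := by rw [hCmdef, hBdef]; abel
      rw [e]; exact h1
    have hmono := inv_antitone hBpd hCmpd hsub
    have hsum := hN.add (psd_smul hmono hlam.le)
    have e2 : ε • (1 : Matrix (Fin d) (Fin d) ℝ) + D
        = (ε • 1 - lam • (Cm⁻¹ - A⁻¹)) + lam • (Cm⁻¹ - B⁻¹) := by
      rw [hDdef]; simp only [smul_sub]; abel
    rw [e2]; exact hsum
  have hX : (D + ε • 1).PosSemidef := by rw [add_comm]; exact hdn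
  obtain ⟨S, hSS, hSh, h3⟩ : ∃ S : Matrix (Fin d) (Fin d) ℝ,
      S * S = D + ε • 1 ∧ Sᴴ = S ∧ (S * (ε • 1 - D) * S).PosSemidef := by
    open scoped MatrixOrder in
    refine ⟨CFC.sqrt (D + ε • 1), CFC.sqrt_mul_sqrt_self _ hX.nonneg,
      (CFC.sqrt_nonneg _).posSemidef.isHermitian, ?_⟩
    have h4 := hup.mul_mul_conjTranspose_same (CFC.sqrt (D + ε • 1))
    open scoped MatrixOrder in
    rwa [(CFC.sqrt_nonneg (D + ε • 1)).posSemidef.isHermitian] at h4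
  have hkey : S * (ε • 1 - D) * S = (ε * ε) • 1 - D * D := by
    have h1' : (ε • (1 : Matrix (Fin d) (Fin d) ℝ) - D) = (2 * ε) • 1 - (D + ε • 1) := by
      module
    rw [h1', ← hSS]
    calc S * ((2 * ε) • 1 - S * S) * S = (2 * ε) • (S * S) - (S * S) * (S * S) := by
          rw [Matrix.mul_sub, Matrix.sub_mul]
          simp only [Matrix.mul_smul, Matrix.smul_mul, Matrix.mul_one]
          simp [Matrix.mul_assoc]
      _ = (ε * ε) • 1 - D * D := by
          rw [hSS]
          simp only [mul_add, add_mul, smul_add, mul_smul_comm, smul_mul_assoc, smul_smul,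
            Matrix.mul_one, Matrix.one_mul]
          module
  have hDD : ((ε * ε) • (1 : Matrix (Fin d) (Fin d) ℝ) - D * D).PosSemidef := by
    rw [← hkey]; exact h3
  rw [eopNorm]
  apply Real.sSup_le _ hε0.le
  rintro c ⟨x, hx, rfl⟩
  rw [hD]
  have hq := hDD.dotProduct_mulVec_nonneg x
  simp only [star_trivial, Matrix.sub_mulVec, dotProduct_sub, Matrix.smul_mulVec,
    dotProduct_smul, Matrix.one_mulVec, smul_eq_mul] at hq
  have hxx0 : 0 ≤ x ⬝ᵥ x := Finset.sum_nonneg fun i _ => mul_self_nonneg (x i)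
  have hxx1 : x ⬝ᵥ x ≤ 1 := by
    rw [evnorm] at hx
    nlinarith [Real.sq_sqrt hxx0, Real.sqrt_nonneg (x ⬝ᵥ x)]
  have hDh : D.IsHermitian :=
    (herm_smul lam hApd.posSemidef.inv.isHermitian).sub
      (herm_smul lam hBpd.posSemidef.inv.isHermitian)
  have hDt : Dᵀ = D := by
    rw [← Matrix.conjTranspose_eq_transpose_of_trivial]; exact hDh
  have hsymq : (D *ᵥ x) ⬝ᵥ (D *ᵥ x) = x ⬝ᵥ ((D * D) *ᵥ x) := by
    rw [← Matrix.mulVec_mulVec, dotProduct_mulVec, ← Matrix.mulVec_transpose, hDt]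
    exact dotProduct_comm _ _
  have hfin : (D *ᵥ x) ⬝ᵥ (D *ᵥ x) ≤ ε * ε := by
    rw [hsymq]
    nlinarith [mul_nonneg hε0.le hε0.le]
  rw [evnorm]
  calc Real.sqrt ((D *ᵥ x) ⬝ᵥ (D *ᵥ x)) ≤ Real.sqrt (ε * ε) := Real.sqrt_le_sqrt hfin
    _ = ε := Real.sqrt_mul_self hε0.le
end
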